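/- For any normalized disjunctive multiplicity expression E = D_1^{M_1} ⊎ … ⊎ D_m^{M_m} and any unordered word w consistent with (C_E, N_E, P_E), the decomposition of w into w_1 ⊎ … ⊎ w_m, where w_i agrees with w on the symbols of D_i and is 0 elsewhere, satisfies w_i ∈ L(D_i^{M_i}) for every i, and w is supported on the symbols occurring in E. -/

import Mathlib

open scoped Classical

variable {α : Type}

/-- Unordered words: multisets of symbols, as occurrence-count functions. -/
abbrev UWord (α : Type) := α → ℕ

/-- Multiplicities `*`, `+`, `?`, `0`, `1`. -/
inductive Mult : Type where
  | zero | one | opt | plus | star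
deriving DecidableEq

/-- Interpretation of multiplicities as sets of natural numbers. -/
def Mult.sem : Mult → Set ℕ
  | .zero => {0}
  | .one => {1}
  | .opt => {0, 1}
  | .plus => {n | 0 < n}
  | .star => Set.univ

/-- A disjunction `a₁^{M₁} | … | a_k^{M_k}`. -/
abbrev Disj (α : Type) := List (α × Mult)

/-- A disjunctive multiplicity expression `D₁^{M₁} ⊎ … ⊎ D_n^{M_n}`. -/
abbrev DME (α : Type) := List (Disj α × Mult)

/-- Language of `a^M`. -/
def singleLang (a : α) (m : Mult) : Set (UWord α) :=
  {w | w a ∈ m.sem ∧ ∀ b, b ≠ a → w b = 0}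

/-- Language of a disjunction. -/
def disjLang (D : Disj α) : Set (UWord α) :=
  {w | ∃ p ∈ D, w ∈ singleLang p.1 p.2}

/-- Pointwise (multiset) sum of a list of unordered words. -/
def sumWords (ws : List (UWord α)) : UWord α := fun a => (ws.map (fun u => u a)).sum

/-- Language of `D^M`. -/
def powLang (L : Set (UWord α)) (m : Mult) : Set (UWord α) :=
  {w | ∃ ws : List (UWord α), ws.length ∈ m.sem ∧ (∀ u ∈ ws, u ∈ L) ∧ w = sumWords ws}

/-- Language of a disjunctive multiplicity expression. -/
def dmeLang (E : DME α) : Set (UWord α) :=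
  {w | ∃ ws : List (UWord α),
      List.Forall₂ (fun p u => u ∈ powLang (disjLang p.1) p.2) E ws ∧ w = sumWords ws}

/-- Symbols occurring in a disjunctive multiplicity expression. -/
def dmeSymbols (E : DME α) : List α := E.flatMap (fun p => p.1.map Prod.fst)

/-- Normalized disjunctive multiplicity expression (each symbol occurs at most once,
each disjunction nonempty, and the two normal-form conditions of the paper). -/
def Normalized (E : DME α) : Prop :=
  (dmeSymbols E).Nodup ∧
  ∀ p ∈ E, p.1 ≠ [] ∧
    (p.2 ≠ Mult.one → p.2 = Mult.plus ∧ ∀ q ∈ p.1, q.2 = Mult.one) ∧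
    ((∃ q ∈ p.1, (0 : ℕ) ∈ q.2.sem) → ∀ q ∈ p.1, (0 : ℕ) ∈ q.2.sem)

/-- Conflicting pairs of siblings `C_E`. -/
def CE (E : DME α) : Set (α × α) :=
  {p | ¬ ∃ w ∈ dmeLang E, w p.1 ≠ 0 ∧ w p.2 ≠ 0}

/-- Extended cardinality map `N_E`. -/
def NE (E : DME α) : Set (α × ℕ) :=
  {p | ∃ w ∈ dmeLang E, w p.1 = p.2}

/-- Sets of required symbols `P_E`. -/
def PE (E : DME α) : Set (Set α) :=
  {X | ∀ w ∈ dmeLang E, ∃ a ∈ X, w a ≠ 0}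

/-- Consistency of an unordered word with a characterizing triple. -/
def ConsTriple (w : UWord α) (C : Set (α × α)) (N : Set (α × ℕ)) (P : Set (Set α)) : Prop :=
  (∀ p ∈ C, ¬ (w p.1 ≠ 0 ∧ w p.2 ≠ 0)) ∧
  (∀ a, (a, w a) ∈ N) ∧
  (∀ X ∈ P, ∃ a ∈ X, w a ≠ 0)

/-- Language of a disjunction-free multiplicity expression given as a list of
symbol/multiplicity pairs. -/
def dfLang (l : List (α × Mult)) : Set (UWord α) :=
  {w | (∀ p ∈ l, w p.1 ∈ p.2.sem) ∧ ∀ b, b ∉ l.map Prod.fst → w b = 0}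

/-- Finite unordered trees. -/
inductive UTree (α : Type) : Type where
  | node : α → List (UTree α) → UTree α

def UTree.lab : UTree α → α | .node a _ => a

def UTree.children : UTree α → List (UTree α) | .node _ ts => ts

/-- Twig queries: labels in `Σ ∪ {⋆}` (wildcard = `none`); each child subquery is tagged
with `false` for a child edge and `true` for a descendant edge. -/
inductive Twig (α : Type) : Type where
  | node : Option α → List (Twig α × Bool) → Twig α

/-- Proper subtree (proper descendant) relation. -/
inductive StrictDesc : UTree α → UTree α → Prop where
  | child {s t : UTree α} : s ∈ t.children → StrictDesc s t
  | step {s u t : UTree α} : StrictDesc s u → u ∈ t.children → StrictDesc s t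

/-- `Sat t q`: the twig query `q` can be embedded in the tree `t`
(root to root, child edges to child edges, descendant edges to proper descendants,
labels preserved up to wildcard). -/
def Sat : UTree α → Twig α → Prop
  | t, .node l qs =>
      (∀ x ∈ l, x = t.lab) ∧
      ∀ p ∈ qs, (p.2 = false → ∃ t' ∈ t.children, Sat t' p.1) ∧
                (p.2 = true → ∃ t', StrictDesc t' t ∧ Sat t' p.1)
termination_by t q => sizeOf q
decreasing_by
  all_goals
    obtain ⟨q', b'⟩ := p
    have h1 : sizeOf ((q', b') : Twig α × Bool) < sizeOf qs := List.sizeOf_lt_of_mem (by assumption)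
    simp at h1 ⊢
    omega

/-- `TEmb t' t` : the tree `t'` can be embedded in the tree `t` (root-, child-, and
label-preserving). -/
def TEmb : UTree α → UTree α → Prop
  | .node a ts', t => t.lab = a ∧ ∀ s' ∈ ts', ∃ s ∈ t.children, TEmb s' s

/-- `QGEmb E a q` : the twig query `q` can be embedded in the rooted graph with edge
relation `E` at root `a`. -/
def QGEmb (E : α → α → Prop) : α → Twig α → Prop
  | a, .node l qs =>
      (∀ x ∈ l, x = a) ∧
      ∀ p ∈ qs, (p.2 = false → ∃ b, E a b ∧ QGEmb E b p.1) ∧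
                (p.2 = true → ∃ b, Relation.TransGen E a b ∧ QGEmb E b p.1)
termination_by a q => sizeOf q
decreasing_by
  all_goals
    obtain ⟨q', b'⟩ := p
    have h1 : sizeOf ((q', b') : Twig α × Bool) < sizeOf qs := List.sizeOf_lt_of_mem (by assumption)
    simp at h1 ⊢
    omega

/-- Labeled paths of a tree: sequences of labels along root-to-node paths. -/
inductive IsLabPath : UTree α → List α → Prop where
  | root {a : α} {ts : List (UTree α)} : IsLabPath (UTree.node a ts) [a]
  | cons {a : α} {ts : List (UTree α)} {s : UTree α} {p : List α} :
      s ∈ ts → IsLabPath s p → IsLabPath (UTree.node a ts) (a :: p)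

/-- Paths of a rooted graph: nonempty vertex sequences starting at the root and
following edges. -/
def IsGPath (E : α → α → Prop) (root : α) (p : List α) : Prop :=
  p ≠ [] ∧ p.head? = some root ∧ p.Chain' E

/-- The unfolding of a rooted graph, truncated at depth `n`.  For a graph with no cycle
reachable from the root, taking `n = Fintype.card α` yields the full unfolding. -/
noncomputable def unfoldG [Fintype α] (E : α → α → Prop) : ℕ → α → UTree α
  | 0, a => .node a []
  | n + 1, a => .node a (((Finset.univ.filter fun b => E a b).toList).map (unfoldG E n))

/-- Number of leaves of a tree. -/
def leafCount : UTree α → ℕ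
  | .node _ ts => if ts.isEmpty then 1 else (ts.attach.map (fun s => leafCount s.1)).sum
decreasing_by
  have h1 := List.sizeOf_lt_of_mem s.2
  simp
  omega

/-- Disjunction-free multiplicity schema: a root label together with, for each label `a`,
a disjunction-free multiplicity expression given as the multiplicity `R a b` of every
symbol `b` (`Mult.zero` meaning `b` does not occur). -/
structure MS (α : Type) where
  root : α
  R : α → α → Mult

/-- Every node's children-label multiset matches the rule for the node's label. -/
inductive LocalOK [DecidableEq α] (R : α → α → Mult) : UTree α → Prop where
  | node {a : α} {ts : List (UTree α)} :
      (∀ b, ((ts.map UTree.lab).count b) ∈ (R a b).sem) →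
      (∀ s ∈ ts, LocalOK R s) →
      LocalOK R (UTree.node a ts)

/-- A tree satisfies a disjunction-free multiplicity schema. -/
def SatS [DecidableEq α] (S : MS α) (t : UTree α) : Prop :=
  t.lab = S.root ∧ LocalOK S.R t

/-- Edges of the universal dependency graph: `b` occurs in `R a` with multiplicity `+` or `1`. -/
def uEdge (S : MS α) (a b : α) : Prop := S.R a b = Mult.plus ∨ S.R a b = Mult.one

/-- Edges of the dependency graph: `b` occurs in `R a` with multiplicity in `{*,+,?,1}`. -/
def dEdge (S : MS α) (a b : α) : Prop := S.R a b ≠ Mult.zero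

/-- A simulation of the rooted graph `(α, root, E)` in the tree `t`. -/
def IsSimulation (E : α → α → Prop) (root : α) (t : UTree α) (R : α → UTree α → Prop) : Prop :=
  R root t ∧ (∀ a s, R a s → s.lab = a) ∧
  (∀ a s, R a s → ∀ b, E a b → ∃ s' ∈ s.children, R b s')

/-- One fuse step: two sibling nodes with the same label are merged into a single node
whose children are the children of both (applied anywhere in the tree). -/
inductive Fuse : UTree α → UTree α → Prop where
  | here {a b : α} {l₁ l₂ l₃ cs₁ cs₂ : List (UTree α)} :
      Fuse (UTree.node a (l₁ ++ UTree.node b cs₁ :: l₂ ++ UTree.node b cs₂ :: l₃))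
           (UTree.node a (l₁ ++ UTree.node b (cs₁ ++ cs₂) :: l₂ ++ l₃))
  | there {a : α} {s s' : UTree α} {l₁ l₂ : List (UTree α)} :
      Fuse s s' → Fuse (UTree.node a (l₁ ++ s :: l₂)) (UTree.node a (l₁ ++ s' :: l₂))

/-- One add step: an arbitrary new subtree is attached as an additional child of some
node of the tree. -/
inductive AddOp : UTree α → UTree α → Prop where
  | here {a : α} {s : UTree α} {l : List (UTree α)} :
      AddOp (UTree.node a l) (UTree.node a (s :: l))
  | there {a : α} {s s' : UTree α} {l₁ l₂ : List (UTree α)} :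
      AddOp s s' → AddOp (UTree.node a (l₁ ++ s :: l₂)) (UTree.node a (l₁ ++ s' :: l₂))

section Aux
variable {α : Type} [DecidableEq α]

lemma sumWords_cons (v : UWord α) (ws : List (UWord α)) (a : α) :
    sumWords (v :: ws) a = v a + sumWords ws a := rfl

lemma disjLang_supp {D : Disj α} {u : UWord α} (h : u ∈ disjLang D) :
    ∀ b, b ∉ D.map Prod.fst → u b = 0 := by
  obtain ⟨q, hq, _, hsupp⟩ := h
  intro b hb
  exact hsupp b (fun e => hb (e ▸ List.mem_map_of_mem (f := Prod.fst) hq))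

lemma powLang_supp {D : Disj α} {m : Mult} {u : UWord α}
    (h : u ∈ powLang (disjLang D) m) : ∀ b, b ∉ D.map Prod.fst → u b = 0 := by
  obtain ⟨ws, _, hmem, rfl⟩ := h
  intro b hb
  show (ws.map (fun u => u b)).sum = 0
  apply List.sum_eq_zero
  intro x hx
  obtain ⟨v, hv, rfl⟩ := List.mem_map.1 hx
  exact disjLang_supp (hmem v hv) b hb

lemma dmeSymbols_cons (q : Disj α × Mult) (E : DME α) :
    dmeSymbols (q :: E) = q.1.map Prod.fst ++ dmeSymbols E := by
  simp [dmeSymbols]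

lemma symbols_subset {E : DME α} {p : Disj α × Mult} (hp : p ∈ E) :
    ∀ a ∈ p.1.map Prod.fst, a ∈ dmeSymbols E := by
  intro a ha
  exact List.mem_flatMap.2 ⟨p, hp, ha⟩

lemma nodup_of_mem {E : DME α} (hnd : (dmeSymbols E).Nodup) {p : Disj α × Mult}
    (hp : p ∈ E) : (p.1.map Prod.fst).Nodup := by
  induction E with
  | nil => cases hp
  | cons q E ih =>
    rw [dmeSymbols_cons, List.nodup_append] at hnd
    rcases List.mem_cons.1 hp with rfl | hp
    · exact hnd.1
    · exact ih hnd.2.1 hp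

lemma sum_tail_supp {E : DME α} {ws : List (UWord α)}
    (h : List.Forall₂ (fun p u => u ∈ powLang (disjLang p.1) p.2) E ws)
    {a : α} (ha : a ∉ dmeSymbols E) : sumWords ws a = 0 := by
  induction h with
  | nil => rfl
  | @cons q u E' ws' hqu _ ih =>
    rw [dmeSymbols_cons] at ha
    rw [sumWords_cons, powLang_supp hqu a (fun h => ha (List.mem_append_left _ h)),
      ih (fun h => ha (List.mem_append_right _ h))]

lemma dme_restrict {E : DME α} {ws : List (UWord α)}
    (h : List.Forall₂ (fun p u => u ∈ powLang (disjLang p.1) p.2) E ws)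
    (hnd : (dmeSymbols E).Nodup) :
    ∀ p ∈ E, (fun a => if a ∈ p.1.map Prod.fst then sumWords ws a else 0)
      ∈ powLang (disjLang p.1) p.2 := by
  induction h with
  | nil => intro p hp; cases hp
  | @cons q u E' ws' hqu htl ih =>
    rw [dmeSymbols_cons, List.nodup_append] at hnd
    intro p hp
    rcases List.mem_cons.1 hp with rfl | hp
    · have : (fun a => if a ∈ p.1.map Prod.fst then sumWords (u :: ws') a else 0) = u := by
        funext a
        by_cases ha : a ∈ p.1.map Prod.fst
        · rw [if_pos ha, sumWords_cons,
            sum_tail_supp htl (fun h => hnd.2.2 _ ha _ h rfl), Nat.add_zero]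
        · rw [if_neg ha, powLang_supp hqu a ha]
      rw [this]; exact hqu
    · have : (fun a => if a ∈ p.1.map Prod.fst then sumWords (u :: ws') a else 0)
          = (fun a => if a ∈ p.1.map Prod.fst then sumWords ws' a else 0) := by
        funext a
        by_cases ha : a ∈ p.1.map Prod.fst
        · have hau : u a = 0 := by
            apply powLang_supp hqu
            intro haq
            exact hnd.2.2 _ haq _ (symbols_subset hp a ha) rfl
          rw [if_pos ha, if_pos ha, sumWords_cons, hau, Nat.zero_add]
        · rw [if_neg ha, if_neg ha]
      rw [this]; exact ih hnd.2.1 p hp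

/-- The restriction of any word of `dmeLang E` to the symbols of `p ∈ E` is in the
component language. -/
lemma dme_word_restrict {E : DME α} (hnd : (dmeSymbols E).Nodup) {u : UWord α}
    (hu : u ∈ dmeLang E) (p : Disj α × Mult) (hp : p ∈ E) :
    (fun a => if a ∈ p.1.map Prod.fst then u a else 0) ∈ powLang (disjLang p.1) p.2 := by
  obtain ⟨ws, hf, rfl⟩ := hu
  exact dme_restrict hf hnd p hp

lemma dme_word_supp {E : DME α} {u : UWord α} (hu : u ∈ dmeLang E) :
    ∀ a, a ∉ dmeSymbols E → u a = 0 := by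
  obtain ⟨ws, hf, rfl⟩ := hu
  intro a ha
  exact sum_tail_supp hf ha

lemma restrict_sum_zero (w : UWord α) (E : DME α) {a : α} (ha : a ∉ dmeSymbols E) :
    sumWords (E.map (fun p => fun b => if b ∈ p.1.map Prod.fst then w b else 0)) a = 0 := by
  induction E with
  | nil => rfl
  | cons q E ih =>
    rw [dmeSymbols_cons] at ha
    rw [List.map_cons, sumWords_cons,
      ih (fun h => ha (List.mem_append_right _ h)), Nat.add_zero]
    exact if_neg (fun h => ha (List.mem_append_left _ h))

lemma restrict_sum (w : UWord α) (E : DME α) (hnd : (dmeSymbols E).Nodup) (a : α)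
    (h0 : a ∉ dmeSymbols E → w a = 0) :
    sumWords (E.map (fun p => fun b => if b ∈ p.1.map Prod.fst then w b else 0)) a = w a := by
  induction E with
  | nil => exact (h0 (by simp [dmeSymbols])).symm
  | cons q E ih =>
    rw [dmeSymbols_cons, List.nodup_append] at hnd
    rw [List.map_cons, sumWords_cons]
    by_cases ha : a ∈ q.1.map Prod.fst
    · rw [if_pos ha, restrict_sum_zero w E (fun h => hnd.2.2 _ ha _ h rfl), Nat.add_zero]
    · rw [if_neg ha, Nat.zero_add]
      refine ih hnd.2.1 (fun h => h0 ?_)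
      rw [dmeSymbols_cons]
      intro hmem
      rcases List.mem_append.1 hmem with h1 | h1
      · exact ha h1
      · exact h h1

/-- unit word -/
private def uw (a : α) : UWord α := fun b => if b = a then 1 else 0

lemma replicate_flat_sum (w : UWord α) (D : Disj α) (hnd : (D.map Prod.fst).Nodup) (b : α) :
    sumWords (D.flatMap (fun q => List.replicate (w q.1) (uw q.1))) b
      = if b ∈ D.map Prod.fst then w b else 0 := by
  induction D with
  | nil => simp [sumWords]
  | cons q D ih =>
    rw [List.map_cons, List.nodup_cons] at hnd
    have : sumWords (List.replicate (w q.1) (uw q.1)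
        ++ D.flatMap (fun q => List.replicate (w q.1) (uw q.1))) b
        = w q.1 * (uw q.1 b) + sumWords (D.flatMap (fun q => List.replicate (w q.1) (uw q.1))) b := by
      show (List.map _ (_ ++ _)).sum = _
      rw [List.map_append, List.sum_append, List.map_replicate, List.sum_replicate,
        smul_eq_mul]
      rfl
    rw [List.flatMap_cons, this, ih hnd.2]
    by_cases hb : b = q.1
    · subst hb
      rw [if_neg hnd.1, if_pos (by simp), uw, if_pos rfl, Nat.mul_one, Nat.add_zero]
    · rw [uw, if_neg hb, Nat.mul_zero, Nat.zero_add, List.map_cons]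
      simp [hb]

lemma powLang_one {α : Type} {L : Set (UWord α)} {u : UWord α} :
    u ∈ powLang L Mult.one ↔ u ∈ L := by
  constructor
  · rintro ⟨ws, hlen, hmem, rfl⟩
    have h1 : ws.length = 1 := hlen
    obtain ⟨v, rfl⟩ := List.length_eq_one_iff.1 h1
    have : sumWords [v] = v := funext fun a => Nat.add_zero _
    rw [this]
    exact hmem v (by simp)
  · intro hu
    refine ⟨[u], rfl, ?_, funext fun a => (Nat.add_zero (u a)).symm⟩
    intro v hv
    rw [List.mem_singleton.1 hv]
    exact hu

end Aux

/-- for a normalized disjunctive multiplicity expression `E` and a word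
`w` consistent with its characterizing triple, the componentwise restriction of `w` to
the symbols of each disjunction belongs to the language of that disjunction (with its
multiplicity), `w` is supported on the symbols of `E`, and `w` is the multiset sum of
these restrictions. -/
theorem consistent_word_decomposition
    {α : Type} [DecidableEq α] (E : DME α) (hE : Normalized E) (w : UWord α)
    (hw : ConsTriple w (CE E) (NE E) (PE E)) :
    (∀ p ∈ E, (fun a => if a ∈ p.1.map Prod.fst then w a else 0) ∈
        powLang (disjLang p.1) p.2) ∧
    (∀ a : α, a ∉ dmeSymbols E → w a = 0) ∧
    w = sumWords (E.map (fun p => fun a => if a ∈ p.1.map Prod.fst then w a else 0)) := by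
  obtain ⟨hnd, hnorm⟩ := hE
  obtain ⟨hC, hN, hP⟩ := hw
  have hsupp : ∀ a : α, a ∉ dmeSymbols E → w a = 0 := by
    intro a ha
    obtain ⟨u, hu, hua⟩ := hN a
    have hua' : u a = w a := hua
    rw [← hua']
    exact dme_word_supp hu a ha
  refine ⟨?_, hsupp, ?_⟩
  · intro p hp
    obtain ⟨hne, hcond2, _⟩ := hnorm p hp
    by_cases hM : p.2 = Mult.one
    · -- the disjunction has multiplicity 1
      rw [hM]
      have hCE : ∀ a ∈ p.1.map Prod.fst, ∀ b ∈ p.1.map Prod.fst, a ≠ b →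
          ¬ (w a ≠ 0 ∧ w b ≠ 0) := by
        intro a ha b hb hab
        apply hC (a, b)
        show ¬ ∃ u ∈ dmeLang E, u a ≠ 0 ∧ u b ≠ 0
        rintro ⟨u, hu, hua, hub⟩
        have hv := dme_word_restrict hnd hu p hp
        rw [hM] at hv
        obtain ⟨q, hq, hq1, hq2⟩ := powLang_one.1 hv
        have h1 : a = q.1 := by
          by_contra hne'
          exact hua (by simpa [ha] using hq2 a hne')
        have h2 : b = q.1 := by
          by_contra hne'
          exact hub (by simpa [hb] using hq2 b hne')
        exact hab (h1.trans h2.symm)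
      apply powLang_one.2
      by_cases hex : ∃ a ∈ p.1.map Prod.fst, w a ≠ 0
      · obtain ⟨a, ha, hwa⟩ := hex
        have honly : ∀ b ∈ p.1.map Prod.fst, b ≠ a → w b = 0 := by
          intro b hb hba
          by_contra hwb
          exact hCE a ha b hb (Ne.symm hba) ⟨hwa, hwb⟩
        obtain ⟨u, hu, hua⟩ := hN a
        have hua' : u a = w a := hua
        have hv := dme_word_restrict hnd hu p hp
        rw [hM] at hv
        obtain ⟨q, hq, hq1, hq2⟩ := powLang_one.1 hv
        have h1 : a = q.1 := by
          by_contra hne'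
          exact hwa (by rw [← hua']; simpa [ha] using hq2 a hne')
        refine ⟨q, hq, ?_, ?_⟩
        · simpa [← h1, ha, hua'] using hq1
        · intro b hb
          by_cases hbm : b ∈ p.1.map Prod.fst
          · simp [hbm, honly b hbm (h1 ▸ hb)]
          · simp [hbm]
      · push_neg at hex
        have key : ∃ q ∈ p.1, (0 : ℕ) ∈ q.2.sem := by
          by_contra hno
          push_neg at hno
          have hPE : {a | a ∈ p.1.map Prod.fst} ∈ PE E := by
            intro u hu
            have hv := dme_word_restrict hnd hu p hp
            rw [hM] at hv
            obtain ⟨q, hq, hq1, hq2⟩ := powLang_one.1 hv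
            have hqm : q.1 ∈ p.1.map Prod.fst := List.mem_map_of_mem (f := Prod.fst) hq
            refine ⟨q.1, hqm, ?_⟩
            intro h0
            exact hno q hq (by simpa [hqm, h0] using hq1)
          obtain ⟨a, ha, hwa⟩ := hP _ hPE
          exact hwa (hex a ha)
        obtain ⟨q, hq, h0⟩ := key
        refine ⟨q, hq, ?_, ?_⟩
        · by_cases hqm : q.1 ∈ p.1.map Prod.fst
          · simpa [hqm, hex q.1 hqm] using h0
          · simpa [hqm] using h0
        · intro b hb
          by_cases hbm : b ∈ p.1.map Prod.fst
          · simp [hbm, hex b hbm]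
          · simp [hbm]
    · -- the disjunction has multiplicity +
      obtain ⟨hMp, hall⟩ := hcond2 hM
      rw [hMp]
      have hPE : {a | a ∈ p.1.map Prod.fst} ∈ PE E := by
        intro u hu
        have hv := dme_word_restrict hnd hu p hp
        rw [hMp] at hv
        obtain ⟨vs, hlen, hmem, hveq⟩ := hv
        have hpos : 0 < vs.length := hlen
        obtain ⟨v₀, vs', rfl⟩ := List.exists_cons_of_ne_nil (List.length_pos_iff.1 hpos)
        obtain ⟨q, hq, hq1, _⟩ := hmem v₀ List.mem_cons_self
        have h1 : v₀ q.1 = 1 := by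
          have := hq1
          rw [hall q hq] at this
          exact this
        have hqm : q.1 ∈ p.1.map Prod.fst := List.mem_map_of_mem (f := Prod.fst) hq
        refine ⟨q.1, hqm, ?_⟩
        have := congrFun hveq q.1
        rw [if_pos hqm, sumWords_cons, h1] at this
        omega
      obtain ⟨a, ha, hwa⟩ := hP _ hPE
      refine ⟨p.1.flatMap (fun q => List.replicate (w q.1) (uw q.1)), ?_, ?_, ?_⟩
      · show 0 < _
        rw [List.length_pos_iff]
        obtain ⟨q, hq, rfl⟩ := List.mem_map.1 ha
        exact List.ne_nil_of_mem (List.mem_flatMap.2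
          ⟨q, hq, List.mem_replicate.2 ⟨hwa, rfl⟩⟩)
      · intro v hv
        obtain ⟨q, hq, hvrep⟩ := List.mem_flatMap.1 hv
        obtain ⟨-, rfl⟩ := List.mem_replicate.1 hvrep
        refine ⟨q, hq, ?_, ?_⟩
        · rw [hall q hq]
          show uw q.1 q.1 = 1
          simp [uw]
        · intro b hb
          simp [uw, hb]
      · funext b
        rw [replicate_flat_sum w p.1 (nodup_of_mem hnd hp) b]
  · funext a
    exact (restrict_sum w E hnd a (hsupp a)).symm
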